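/- arXiv:2106.11781 — 4 statements merged into one kernel-verified Lean document; each statement's English description precedes it below -/
import Mathlib

section
/- Every finite group of order n with gcd(n, φ(n)) = 1 is cyclic. -/
open Subgroup Monoid

private lemma coprime_totient_of_dvd {n m : ℕ} (hm : m ∣ n)
    (h : Nat.Coprime n n.totient) : Nat.Coprime m m.totient :=
  Nat.Coprime.coprime_dvd_left hm
    (Nat.Coprime.coprime_dvd_right (Nat.totient_dvd_of_dvd hm) h)

private lemma squarefree_of_coprime_totient {n : ℕ} (hn : n ≠ 0)
    (h : Nat.Coprime n n.totient) : Squarefree n := by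
  rw [Nat.squarefree_iff_prime_squarefree]
  rintro p hp ⟨m, rfl⟩
  have h1 : p ∣ (p * p * m).totient := by
    rw [mul_assoc, Nat.totient_mul_of_prime_of_dvd hp (dvd_mul_right p m)]
    exact dvd_mul_right _ _
  have h2 : p ∣ p * p * m := ⟨p * m, by ring⟩
  have := Nat.eq_one_of_dvd_coprimes h h2 h1
  exact hp.one_lt.ne' this

universe u

private lemma range_eq_bot_of_coprime {G : Type u} [Group G] {H : Type v} [Group H]
    [Finite G] [Finite H] (f : G →* H)
    (hcop : Nat.Coprime (Nat.card G) (Nat.card H)) : ∀ g, f g = 1 := by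
  intro g
  have h1 : Nat.card f.range ∣ Nat.card G := by
    have e := Nat.card_congr (QuotientGroup.quotientKerEquivRange f).toEquiv
    rw [← e]
    exact Subgroup.card_quotient_dvd_card _
  have h2 : Nat.card f.range ∣ Nat.card H := Subgroup.card_subgroup_dvd_card _
  have : Nat.card f.range = 1 := Nat.eq_one_of_dvd_coprimes hcop h1 h2
  have hbot : f.range = ⊥ := Subgroup.eq_bot_of_card_eq _ this
  have : f g ∈ f.range := ⟨g, rfl⟩
  rwa [hbot, Subgroup.mem_bot] at this

private theorem cyclic_aux : ∀ (n : ℕ) (G : Type u) [Group G] [Fintype G],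
    Fintype.card G = n → Nat.Coprime n n.totient → IsCyclic G := by
  intro n
  induction n using Nat.strong_induction_on with
  | _ n ih =>
    intro G _ _ hcard h
    have hn0 : n ≠ 0 := hcard ▸ Fintype.card_ne_zero
    by_cases hn1 : n = 1
    · have : Fintype.card G ≤ 1 := by omega
      haveI := Fintype.card_le_one_iff_subsingleton.mp this
      exact isCyclic_of_subsingleton
    · set p := n.minFac with hpdef
      have hp : p.Prime := Nat.minFac_prime hn1
      haveI : Fact p.Prime := ⟨hp⟩
      have hpn : p ∣ n := Nat.minFac_dvd n
      have hsq : Squarefree n := squarefree_of_coprime_totient hn0 h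
      have hcardG : Nat.card G = n := by rw [Nat.card_eq_fintype_card, hcard]
      obtain ⟨P⟩ : Nonempty (Sylow p G) := inferInstance
      -- card of the Sylow subgroup is p
      have hfact : n.factorization p = 1 := by
        have h1 : n.factorization p ≤ 1 := hsq.natFactorization_le_one p
        have h2 : 1 ≤ n.factorization p :=
          (Nat.Prime.factorization_pos_of_dvd hp hn0 hpn)
        omega
      have hPcard : Nat.card P = p := by
        rw [P.card_eq_multiplicity, hcardG, hfact, pow_one]
      haveI : IsCyclic P := isCyclic_of_prime_card hPcard
      -- N(P) ≤ C(P)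
      have hNC : normalizer ((P : Subgroup G) : Set G) ≤ centralizer (P : Set G) := by
        have hcop : Nat.Coprime (Nat.card (normalizer ((P : Subgroup G) : Set G)))
            (Nat.card (MulAut P)) := by
          rw [IsCyclic.card_mulAut, hPcard]
          have h1 : Nat.card (normalizer ((P : Subgroup G) : Set G)) ∣ n := by
            rw [← hcardG]; exact Subgroup.card_subgroup_dvd_card _
          have h2 : p.totient ∣ n.totient := Nat.totient_dvd_of_dvd hpn
          exact Nat.Coprime.coprime_dvd_left h1 (Nat.Coprime.coprime_dvd_right h2 h)
        have htriv := range_eq_bot_of_coprime (P : Subgroup G).normalizerMonoidHom hcop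
        have hker : (P : Subgroup G).normalizerMonoidHom.ker = ⊤ := by
          ext x; simp [MonoidHom.mem_ker, htriv x]
        rw [Subgroup.normalizerMonoidHom_ker] at hker
        exact Subgroup.subgroupOf_eq_top.mp hker
      -- Burnside's normal p-complement theorem
      have hcompl := MonoidHom.ker_transferSylow_isComplement' P hNC
      set K : Subgroup G := (MonoidHom.transferSylow P hNC).ker with hKdef
      have hmul : Nat.card K * Nat.card P = n := by rw [← hcardG]; exact hcompl.card_mul
      have hKdvd : Nat.card K ∣ n := ⟨Nat.card P, hmul.symm⟩
      have hKlt : Nat.card K < n := by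
        have := hp.one_lt
        have hK0 : 0 < Nat.card K := Nat.card_pos
        calc Nat.card K < Nat.card K * Nat.card P := by
              rw [hPcard]; exact lt_mul_of_one_lt_right hK0 hp.one_lt
          _ = n := hmul
      -- K is cyclic by induction
      haveI : Fintype K := Fintype.ofFinite K
      haveI : IsCyclic K := by
        refine ih (Nat.card K) hKlt K (Nat.card_eq_fintype_card.symm)
          (coprime_totient_of_dvd hKdvd h)
      -- K ≤ center G via the conjugation action
      have hKcen : K ≤ center G := by
        have hcop : Nat.Coprime (Nat.card G) (Nat.card (MulAut K)) := by
          rw [IsCyclic.card_mulAut, hcardG]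
          exact Nat.Coprime.coprime_dvd_right
            (Nat.totient_dvd_of_dvd hKdvd) h
        have htriv := range_eq_bot_of_coprime (MulAut.conjNormal (H := K)) hcop
        intro k hk
        rw [Subgroup.mem_center_iff]
        intro g
        have := congrArg (fun (e : MulAut K) => (e ⟨k, hk⟩ : G)) (htriv g)
        simp only [MulAut.conjNormal_apply, MulAut.one_apply] at this
        have hgk : g * k * g⁻¹ = k := this
        conv_rhs => rw [← hgk]
        group
      -- G / K is cyclic of order p
      have hGKcard : Nat.card (G ⧸ K) = p := by
        rw [← Subgroup.index, hcompl.symm.index_eq_card, hPcard]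
      haveI : IsCyclic (G ⧸ K) := isCyclic_of_prime_card hGKcard
      -- hence G is abelian
      letI : CommGroup G := commGroupOfCyclicCenterQuotient (QuotientGroup.mk' K)
        (by rw [QuotientGroup.ker_mk']; exact hKcen)
      -- abelian group of squarefree order is cyclic
      have hexp0 : Monoid.exponent G ≠ 0 := Monoid.exponent_ne_zero_of_finite
      have hdvd2 : n ∣ Monoid.exponent G := by
        rw [← Nat.factorization_le_iff_dvd hn0 hexp0]
        intro q
        rcases Nat.eq_zero_or_pos (n.factorization q) with h0 | hpos
        · simp [h0]
        · have hq : q.Prime := by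
            by_contra hq
            exact hpos.ne' (Nat.factorization_eq_zero_of_not_prime n hq)
          haveI : Fact q.Prime := ⟨hq⟩
          have hqd : q ∣ Fintype.card G := by
            rw [hcard]
            exact Nat.dvd_of_factorization_pos hpos.ne'
          obtain ⟨g, hg⟩ := exists_prime_orderOf_dvd_card q hqd
          have hqe : q ∣ Monoid.exponent G := hg ▸ Monoid.order_dvd_exponent g
          calc n.factorization q ≤ 1 := hsq.natFactorization_le_one q
            _ ≤ (Monoid.exponent G).factorization q :=
              Nat.Prime.factorization_pos_of_dvd hq hexp0 hqe
      have hexp : Monoid.exponent G = Nat.card G :=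
        Nat.dvd_antisymm Group.exponent_dvd_nat_card (hcardG ▸ hdvd2)
      exact IsCyclic.of_exponent_eq_card hexp

theorem isCyclic_of_coprime_card_totient (G : Type*) [Group G] [Fintype G]
    (h : Nat.Coprime (Fintype.card G) (Nat.totient (Fintype.card G))) :
    IsCyclic G := by
  exact cyclic_aux (Fintype.card G) G rfl h
end

section
/- A composite squarefree positive integer n satisfies b^n ≡ b (mod n) for all integers b if and only if (p − 1) divides (n − 1) for every prime p dividing n. -/
lemma korselt_aux (p n : ℕ) (hp : p.Prime) (hn : 1 ≤ n) (hd : (p - 1) ∣ (n - 1)) :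
    ∀ a : ZMod p, a ^ n = a := by
  haveI := Fact.mk hp
  intro a
  by_cases ha : a = 0
  · subst ha
    rw [zero_pow (by omega)]
  · obtain ⟨k, hk⟩ := hd
    have h1 : a ^ (p - 1) = 1 := ZMod.pow_card_sub_one_eq_one ha
    have hne : n = (n - 1) + 1 := by omega
    calc a ^ n = a ^ ((p - 1) * k) * a := by rw [hne, hk, pow_succ]
    _ = (a ^ (p - 1)) ^ k * a := by rw [pow_mul]
    _ = a := by rw [h1, one_pow, one_mul]

theorem korselt_criterion (n : ℕ) (hsq : Squarefree n) (hcomp : 1 < n ∧ ¬ n.Prime) :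
    (∀ b : ℤ, (n : ℤ) ∣ b ^ n - b) ↔
      ∀ p : ℕ, p.Prime → p ∣ n → (p - 1) ∣ (n - 1) := by
  obtain ⟨hn1, -⟩ := hcomp
  constructor
  · intro h p hp hpn
    haveI := Fact.mk hp
    obtain ⟨g, hg⟩ := IsCyclic.exists_generator (α := (ZMod p)ˣ)
    have hord : orderOf g = p - 1 := by
      rw [orderOf_eq_card_of_forall_mem_zpowers hg, Nat.card_eq_fintype_card, ZMod.card_units_eq_totient,
        Nat.totient_prime hp]
    set b : ℤ := ((g : ZMod p).val : ℤ) with hb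
    have hbz : (b : ZMod p) = (g : ZMod p) := by
      simp [hb, ZMod.natCast_val, ZMod.intCast_cast, ZMod.cast_id]
    have hpd : (p : ℤ) ∣ b ^ n - b := dvd_trans (Int.natCast_dvd_natCast.mpr hpn) (h b)
    have hzm : ((b : ZMod p)) ^ n = (b : ZMod p) := by
      have := (ZMod.intCast_zmod_eq_zero_iff_dvd _ _).mpr hpd
      push_cast at this
      linear_combination this
    rw [hbz] at hzm
    have hgu : g ^ n = g := by
      apply Units.ext
      rw [Units.val_pow_eq_pow_val]
      exact hzm
    have hg1 : g ^ (n - 1) = 1 := by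
      have : g ^ (n - 1) * g = 1 * g := by
        rw [one_mul, ← pow_succ]
        have : n - 1 + 1 = n := by omega
        rw [this, hgu]
      exact mul_right_cancel this
    rw [← hord]
    exact orderOf_dvd_of_pow_eq_one hg1
  · intro h b
    have hprod : (n : ℤ) = ∏ p ∈ n.primeFactors, (p : ℤ) := by
      rw [← Nat.cast_prod, Nat.prod_primeFactors_of_squarefree hsq]
    rw [hprod]
    apply Finset.prod_dvd_of_coprime
    · intro p hpmem q hqmem hpq
      have hp := Nat.prime_of_mem_primeFactors hpmem
      have hq := Nat.prime_of_mem_primeFactors hqmem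
      exact Nat.isCoprime_iff_coprime.mpr ((Nat.coprime_primes hp hq).mpr hpq)
    · intro p hpmem
      have hp := Nat.prime_of_mem_primeFactors hpmem
      have hpn := Nat.dvd_of_mem_primeFactors hpmem
      have key := korselt_aux p n hp (by omega) (h p hp hpn)
      have : ((b ^ n - b : ℤ) : ZMod p) = 0 := by
        push_cast
        rw [key]
        ring
      exact (ZMod.intCast_zmod_eq_zero_iff_dvd _ _).mp this
end

section
/- If n is a squarefree positive integer divisible by 3 and k·φ(n) = n − 1 for some positive integer k with n composite, then k ≡ 1 (mod 3). -/
theorem k_mod_three_of_three_dvd (n k : ℕ) (hsq : Squarefree n) (h3 : 3 ∣ n)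
    (hcomp : 1 < n ∧ ¬ n.Prime) (hk : 0 < k) (h : k * Nat.totient n = n - 1) :
    k % 3 = 1 := by
  obtain ⟨hn1, hnp⟩ := hcomp
  have hn0 : n ≠ 0 := by omega
  have hn3 : 3 ≤ n := Nat.le_of_dvd (by omega) h3
  have hmod : (n - 1) % 3 = 2 := by omega
  -- each prime factor p ≠ 3 satisfies (p-1) % 3 = 1
  have key : ∀ p ∈ n.primeFactors, p ≠ 3 → (p - 1) % 3 = 1 := by
    intro p hp hne
    have hpp : Nat.Prime p := Nat.prime_of_mem_primeFactors hp
    have hdvd : p - 1 ∣ n - 1 := by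
      have h1 : Nat.totient p ∣ Nat.totient n :=
        Nat.totient_dvd_of_dvd (Nat.dvd_of_mem_primeFactors hp)
      rw [Nat.totient_prime hpp] at h1
      exact h1.trans ⟨k, by rw [← h]; ring⟩
    have hp2 : 2 ≤ p := hpp.two_le
    -- p % 3 ≠ 0 since p prime and p ≠ 3
    have hp3 : ¬ (3 ∣ p) := by
      intro hd
      exact hne ((Nat.prime_dvd_prime_iff_eq Nat.prime_three hpp).mp hd).symm
    -- if (p-1) % 3 ≠ 1 then 3 ∣ p - 1, contradicting (n-1)%3 = 2
    by_contra hc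
    have h31 : (3:ℕ) ∣ p - 1 := by omega
    obtain ⟨c, hc'⟩ := h31.trans hdvd
    omega
  -- totient of squarefree n is product of (p-1)
  have htot : Nat.totient n = ∏ p ∈ n.primeFactors, (p - 1) := by
    rw [Nat.totient_eq_prod_factorization hn0, Finsupp.prod]
    rw [Nat.support_factorization]
    refine Finset.prod_congr rfl (fun p hp => ?_)
    have h1 : n.factorization p = 1 := by
      have hle := (Nat.squarefree_iff_factorization_le_one hn0).mp hsq p
      have hpos : n.factorization p ≠ 0 := Finsupp.mem_support_iff.mp hp
      omega
    rw [h1]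
    simp
  have h3mem : 3 ∈ n.primeFactors :=
    Nat.mem_primeFactors.mpr ⟨Nat.prime_three, h3, hn0⟩
  have hrest : (∏ p ∈ n.primeFactors.erase 3, (p - 1)) % 3 = 1 := by
    rw [Finset.prod_nat_mod]
    rw [Finset.prod_congr rfl (fun p hp => key p (Finset.mem_of_mem_erase hp)
      (Finset.ne_of_mem_erase hp))]
    simp
  have hphi : Nat.totient n % 3 = 2 := by
    rw [htot, ← Finset.mul_prod_erase _ _ h3mem]
    rw [Nat.mul_mod, hrest]
  have := h
  -- reduce mod 3
  have hk3 : (k * Nat.totient n) % 3 = 2 := by rw [h, hmod]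
  rw [Nat.mul_mod, hphi] at hk3
  omega
end

section
/- Let n be a composite number with k·φ(n) = n − 1 for an integer k ≥ 3. Then the abundancy index σ(n)/n exceeds 24/π². -/
open Finset

private noncomputable def fsq : ℕ →* ℝ where
  toFun := fun m => ((m : ℝ) ^ 2)⁻¹
  map_one' := by norm_num
  map_mul' := fun a b => by
    push_cast
    rw [mul_pow, mul_inv]

private lemma fsq_apply (m : ℕ) : fsq m = ((m : ℝ) ^ 2)⁻¹ := rfl

private lemma fsq_summable : Summable (⇑fsq) := by
  have := Real.summable_nat_pow_inv.mpr (by norm_num : 1 < 2)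
  exact this

private lemma fsq_tsum : ∑' m : ℕ, fsq m = Real.pi ^ 2 / 6 := by
  have h := hasSum_zeta_two
  have he : (fun n : ℕ => 1 / (n : ℝ) ^ 2) = ⇑fsq := by
    funext n; rw [fsq_apply, one_div]
  rw [he] at h
  exact h.tsum_eq

private lemma totient_prod_primes (F : Finset ℕ) (hF : ∀ p ∈ F, p.Prime) :
    Nat.totient (∏ p ∈ F, p) = ∏ p ∈ F, (p - 1) := by
  classical
  induction F using Finset.induction_on with
  | empty => simp
  | insert _ _ ha ih =>
    rename_i a s
    rw [Finset.prod_insert ha, Finset.prod_insert ha,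
      Nat.totient_mul, Nat.totient_prime (hF a (mem_insert_self a s)),
      ih (fun p hp => hF p (mem_insert_of_mem hp))]
    · exact Nat.Coprime.prod_right fun p hp =>
        (Nat.coprime_primes (hF a (mem_insert_self a s))
          (hF p (mem_insert_of_mem hp))).mpr (by rintro rfl; exact ha hp)

/-- Key analytic bound: for a finite set of odd primes, the product of `(1 - p⁻²)`
is at least `8 / π²`. -/
private lemma prod_one_sub_inv_sq_ge (F : Finset ℕ) (hF : ∀ p ∈ F, p.Prime)
    (h2 : 2 ∉ F) : (8 : ℝ) / Real.pi ^ 2 ≤ ∏ p ∈ F, (1 - ((p : ℝ) ^ 2)⁻¹) := by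
  classical
  have hpi : (0 : ℝ) < Real.pi ^ 2 := by positivity
  -- each factor is in (0, 1]
  have hfac : ∀ p ∈ F, (0 : ℝ) < 1 - ((p : ℝ) ^ 2)⁻¹ := by
    intro p hp
    have h2p : (2 : ℝ) ≤ p := by exact_mod_cast (hF p hp).two_le
    have : ((p : ℝ) ^ 2)⁻¹ < 1 := by
      rw [inv_lt_one_iff₀]; right; nlinarith
    linarith
  have hprodpos : (0 : ℝ) < ∏ p ∈ F, (1 - ((p : ℝ) ^ 2)⁻¹) := Finset.prod_pos hfac
  -- Euler-product style bound for the inverse product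
  set s : Finset ℕ := insert 2 F with hs
  have hsP : ∀ p ∈ s, p.Prime := by
    intro p hp
    rcases Finset.mem_insert.mp hp with rfl | hp
    · exact Nat.prime_two
    · exact hF p hp
  have hEP := EulerProduct.prod_filter_prime_geometric_eq_tsum_factoredNumbers
      (f := fsq) fsq_summable s
  have hfilter : s.filter Nat.Prime = s := Finset.filter_true_of_mem hsP
  rw [hfilter] at hEP
  have hle : (∑' m : Nat.factoredNumbers s, fsq (m : ℕ)) ≤ Real.pi ^ 2 / 6 := by
    rw [← fsq_tsum]
    refine Summable.tsum_subtype_le (fun m : ℕ => fsq m) _ (fun m => ?_) fsq_summable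
    have hnn : (0:ℝ) ≤ ((m : ℝ) ^ 2)⁻¹ := by positivity
    exact hnn
  have hEP' : (∏ p ∈ s, (1 - fsq p)⁻¹) ≤ Real.pi ^ 2 / 6 := by
    rw [hEP]; exact hle
  have hsplit : (∏ p ∈ s, (1 - fsq p)⁻¹)
      = (1 - (4 : ℝ)⁻¹)⁻¹ * ∏ p ∈ F, (1 - fsq p)⁻¹ := by
    rw [hs, Finset.prod_insert h2, fsq_apply]
    norm_num
  have hF' : (∏ p ∈ F, (1 - ((p : ℝ) ^ 2)⁻¹))⁻¹ ≤ Real.pi ^ 2 / 8 := by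
    have hinv : (∏ p ∈ F, (1 - fsq p)⁻¹) = (∏ p ∈ F, (1 - ((p : ℝ) ^ 2)⁻¹))⁻¹ := by
      rw [← Finset.prod_inv_distrib]
      exact Finset.prod_congr rfl fun p _ => by rw [fsq_apply]
    rw [hsplit, hinv] at hEP'
    norm_num at hEP' ⊢
    linarith
  rw [div_le_iff₀ hpi]
  nlinarith [mul_le_mul_of_nonneg_left hF' hprodpos.le,
    mul_inv_cancel₀ hprodpos.ne']

theorem abundancy_gt_of_lehmer (n k : ℕ) (hcomp : 1 < n ∧ ¬ n.Prime) (hk : 3 ≤ k)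
    (h : k * Nat.totient n = n - 1) :
    ((ArithmeticFunction.sigma 1 n : ℝ)) / (n : ℝ) > 24 / Real.pi ^ 2 := by
  obtain ⟨hn1, hnp⟩ := hcomp
  have hn0 : 0 < n := by omega
  -- n ≥ 4 since composite
  have hn4 : 4 ≤ n := by
    by_contra hlt
    interval_cases n <;> exact absurd (by norm_num) hnp
  -- n is squarefree
  have hsq : Squarefree n := by
    rw [Nat.squarefree_iff_prime_squarefree]
    intro p hp hdvd
    rw [← pow_two p] at hdvd
    have h1 : p ∣ Nat.totient n := by
      have := Nat.totient_dvd_of_dvd hdvd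
      rw [Nat.totient_prime_pow hp (by norm_num : 0 < 2)] at this
      exact dvd_trans (dvd_mul_of_dvd_left (dvd_pow_self p one_ne_zero) _) this
    have h2 : p ∣ n - 1 := h ▸ Dvd.dvd.mul_left h1 k
    have h3 : p ∣ n := dvd_trans (dvd_pow_self p (by norm_num)) hdvd
    have h4 := Nat.dvd_sub h3 h2
    rw [show n - (n - 1) = 1 by omega] at h4
    exact hp.ne_one (Nat.dvd_one.mp h4)
  -- n is odd
  have hodd : ¬ 2 ∣ n := by
    intro h2n
    have heven : Even (Nat.totient n) := Nat.totient_even (by omega)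
    have he : Even (n - 1) := h ▸ heven.mul_left k
    obtain ⟨m, hm⟩ := he
    obtain ⟨j, hj⟩ := h2n
    omega
  have h2F : 2 ∉ n.primeFactors := by
    intro hmem
    exact hodd (Nat.dvd_of_mem_primeFactors hmem)
  set F := n.primeFactors with hF
  have hFP : ∀ p ∈ F, p.Prime := fun p hp => Nat.prime_of_mem_primeFactors hp
  have hnprod : ∏ p ∈ F, p = n := Nat.prod_primeFactors_of_squarefree hsq
  -- sigma as a product
  have hσ : (ArithmeticFunction.sigma 1 n : ℕ) = ∏ p ∈ F, (p + 1) := by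
    conv_lhs => rw [← hnprod]
    rw [ArithmeticFunction.IsMultiplicative.map_prod_of_prime
      ArithmeticFunction.isMultiplicative_sigma F hFP]
    refine Finset.prod_congr rfl fun p hp => ?_
    rw [← pow_one p, ArithmeticFunction.sigma_one_apply_prime_pow (hFP p hp)]
    simp [Finset.sum_range_succ]
    omega
  -- totient as a product
  have hφ : Nat.totient n = ∏ p ∈ F, (p - 1) := by
    conv_lhs => rw [← hnprod]
    exact totient_prod_primes F hFP
  have hφpos : 0 < Nat.totient n := Nat.totient_pos.mpr hn0
  -- the real product P
  set P : ℝ := ∏ p ∈ F, (1 - ((p : ℝ) ^ 2)⁻¹) with hPdef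
  have hPbound := prod_one_sub_inv_sq_ge F hFP h2F
  have hPpos : 0 < P := by
    have : (0:ℝ) < 8 / Real.pi ^ 2 := by positivity
    linarith
  -- key identity : σ * φ = P * n^2
  have hkey : (ArithmeticFunction.sigma 1 n : ℝ) * (Nat.totient n : ℝ) = P * (n : ℝ) ^ 2 := by
    rw [hσ, hφ]
    push_cast
    rw [hPdef]
    have hn2 : ((n : ℝ)) ^ 2 = ∏ p ∈ F, ((p : ℝ)) ^ 2 := by
      rw [← hnprod]
      push_cast
      rw [← Finset.prod_pow]
    rw [hn2, ← Finset.prod_mul_distrib, ← Finset.prod_mul_distrib]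
    refine Finset.prod_congr rfl fun p hp => ?_
    have hp2 : (2 : ℝ) ≤ p := by exact_mod_cast (hFP p hp).two_le
    have hcast : ((p - 1 : ℕ) : ℝ) = (p : ℝ) - 1 := by
      have h1p : 1 ≤ p := (hFP p hp).one_lt.le
      push_cast [h1p]; ring
    rw [hcast]
    field_simp
    ring
  -- n / φ(n) > 3
  have hnφ : (3 : ℝ) * (Nat.totient n : ℝ) < (n : ℝ) := by
    have hlt : 3 * Nat.totient n < n := by
      have hle3 : 3 * Nat.totient n ≤ k * Nat.totient n := Nat.mul_le_mul_right _ hk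
      omega
    exact_mod_cast hlt
  -- conclude
  have hφR : (0 : ℝ) < (Nat.totient n : ℝ) := by exact_mod_cast hφpos
  have hnR : (0 : ℝ) < (n : ℝ) := by exact_mod_cast hn0
  have hσn : (ArithmeticFunction.sigma 1 n : ℝ) / (n : ℝ)
      = P * ((n : ℝ) / (Nat.totient n : ℝ)) := by
    field_simp
    nlinarith [hkey]
  rw [hσn]
  have h3 : (3 : ℝ) < (n : ℝ) / (Nat.totient n : ℝ) := by
    rw [lt_div_iff₀ hφR]; linarith
  have hpi : (0 : ℝ) < Real.pi ^ 2 := by positivity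
  calc (24 : ℝ) / Real.pi ^ 2 = (8 / Real.pi ^ 2) * 3 := by ring
    _ < P * ((n : ℝ) / (Nat.totient n : ℝ)) := by
        apply mul_lt_mul' hPbound h3 (by norm_num) hPpos
end
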